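/- For all vectors a, b ∈ ℝⁿ and all real p with 1 < p < ∞, the inequality (|a|^{p-2} a − |b|^{p-2} b) · (a − b) ≥ 0 holds, where · denotes the Euclidean inner product and |·| the Euclidean norm (with the convention |0|^{p-2}·0 = 0). -/

import Mathlib

lemma rpow_mul_self {x : ℝ} (hx : 0 ≤ x) {q : ℝ} (hq : q + 1 ≠ 0) :
    x ^ q * x = x ^ (q + 1) := by
  rcases hx.eq_or_lt with h | h
  · subst h
    simp [Real.zero_rpow hq]
  · rw [Real.rpow_add h, Real.rpow_one]

lemma key_mono (p : ℝ) (hp : 1 < p) {x y : ℝ} (hx : 0 ≤ x) (hy : 0 ≤ y) :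
    0 ≤ (x ^ (p - 1) - y ^ (p - 1)) * (x - y) := by
  rcases le_total x y with h | h
  · nlinarith [Real.rpow_le_rpow hx h (by linarith : (0:ℝ) ≤ p - 1)]
  · nlinarith [Real.rpow_le_rpow hy h (by linarith : (0:ℝ) ≤ p - 1)]

theorem stmt3 {n : ℕ} (p : ℝ) (hp : 1 < p) (a b : EuclideanSpace ℝ (Fin n)) :
    0 ≤ (inner ℝ ((‖a‖ ^ (p - 2)) • a - (‖b‖ ^ (p - 2)) • b) (a - b) : ℝ) := by
  set x := ‖a‖ with hxdef
  set y := ‖b‖ with hydef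
  have hx : 0 ≤ x := norm_nonneg a
  have hy : 0 ≤ y := norm_nonneg b
  have hab : (inner ℝ a b : ℝ) ≤ x * y := real_inner_le_norm a b
  have e1 : x ^ (p - 2) * x = x ^ (p - 1) := by
    have := rpow_mul_self hx (q := p - 2) (by intro h; linarith)
    rwa [show p - 2 + 1 = p - 1 by ring] at this
  have e2 : x ^ (p - 1) * x = x ^ p := by
    have := rpow_mul_self hx (q := p - 1) (by intro h; nlinarith)
    rwa [show p - 1 + 1 = p by ring] at this
  have f1 : y ^ (p - 2) * y = y ^ (p - 1) := by
    have := rpow_mul_self hy (q := p - 2) (by intro h; linarith)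
    rwa [show p - 2 + 1 = p - 1 by ring] at this
  have f2 : y ^ (p - 1) * y = y ^ p := by
    have := rpow_mul_self hy (q := p - 1) (by intro h; nlinarith)
    rwa [show p - 1 + 1 = p by ring] at this
  have h2x : (0:ℝ) ≤ x ^ (p - 2) := Real.rpow_nonneg hx _
  have h2y : (0:ℝ) ≤ y ^ (p - 2) := Real.rpow_nonneg hy _
  have key := key_mono p hp hx hy
  have expand : (inner ℝ ((x ^ (p - 2)) • a - (y ^ (p - 2)) • b) (a - b) : ℝ)
      = x ^ (p - 2) * (x * x) - x ^ (p - 2) * (inner ℝ a b : ℝ)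
        - y ^ (p - 2) * (inner ℝ a b : ℝ) + y ^ (p - 2) * (y * y) := by
    rw [inner_sub_left, inner_sub_right, inner_sub_right, real_inner_smul_left,
      real_inner_smul_left, real_inner_smul_left, real_inner_smul_left,
      real_inner_self_eq_norm_mul_norm, real_inner_self_eq_norm_mul_norm,
      real_inner_comm b a]
    ring
  rw [expand]
  nlinarith [mul_le_mul_of_nonneg_left hab h2x, mul_le_mul_of_nonneg_left hab h2y]
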